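/- Consider the inhomogeneous backward random walk on the grid with step Δx in space and Δt in time, started at x_n at time t_{l+1}, with drift control ξ : G → [-1/λ, 1/λ] (λ = Δt/Δx), where at each site the walk moves +Δx with probability ρ = 1/2 + (λ/2)ξ and -Δx with probability 1/2 - (λ/2)ξ. Define η^{l+1}(γ) := γ^{l+1} and η^k(γ) := γ^{l+1} - Σ_{k < k' ≤ l+1} ξ(γ^{k'}, t_{k'}) Δt for k ≤ l. Then the variance σ̃ᵏ := E[|γᵏ - ηᵏ(γ)|²] satisfies σ̃ᵏ ≤ (t^{l+1} - t^k)/λ · Δx, and the mean deviation d̃ᵏ := E[|γᵏ - ηᵏ(γ)|] satisfies (d̃ᵏ)² ≤ σ̃ᵏ. -/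

import Mathlib

/-- The backward random walk path determined by the step signs `s`:
`rwPath xn Δx l s k` is the position `γᵏ`, with `γ^{l+1} = xn` and
`γ^{k+1} - γᵏ = ±Δx` (`+Δx` when `s k = true`). -/
noncomputable def rwPath (xn Δx : ℝ) (l : ℕ) (s : ℕ → Bool) (k : ℕ) : ℝ :=
  xn - Δx * ∑ k' ∈ Finset.Ico k (l + 1), (if s k' then (1:ℝ) else -1)

/-- Probability weight of a sample path: at the step from `(γ^{k+1}, t_{k+1})`,
the walk moves by `-Δx` with probability `1/2 + (λ/2) ξ` and by `+Δx` with
probability `1/2 - (λ/2) ξ`, where `ξ` is evaluated at `(γ^{k+1}, t_{k+1})`. -/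
noncomputable def rwWeight (xn Δx lam : ℝ) (ξ : ℝ → ℕ → ℝ) (l : ℕ) (s : ℕ → Bool) : ℝ :=
  ∏ k ∈ Finset.range (l + 1),
    if s k then (1/2 + lam/2 * ξ (rwPath xn Δx l s (k + 1)) (k + 1))
    else (1/2 - lam/2 * ξ (rwPath xn Δx l s (k + 1)) (k + 1))

/-- The compensated (averaged) path `ηᵏ(γ) = γ^{l+1} - Σ_{k < k' ≤ l+1} ξ(γ^{k'}, t_{k'}) Δt`. -/
noncomputable def rwEta (xn Δx Δt : ℝ) (ξ : ℝ → ℕ → ℝ) (l : ℕ) (s : ℕ → Bool) (k : ℕ) : ℝ :=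
  xn - Δt * ∑ k' ∈ Finset.Ico (k + 1) (l + 2), ξ (rwPath xn Δx l s k') k'

/-- Extension of step signs indexed by `Fin (l+1)` to all of `ℕ`. -/
def extBool (l : ℕ) (s : Fin (l + 1) → Bool) : ℕ → Bool :=
  fun k => if h : k < l + 1 then s ⟨k, h⟩ else false

/-- Expectation of a random variable `f` of the sample path with respect to the
random-walk measure. -/
noncomputable def rwExp (xn Δx Δt lam : ℝ) (ξ : ℝ → ℕ → ℝ) (l : ℕ)
    (f : (ℕ → Bool) → ℝ) : ℝ :=
  ∑ s : Fin (l + 1) → Bool,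
    rwWeight xn Δx lam ξ l (extBool l s) * f (extBool l s)

namespace RW6

noncomputable def pfac (xn Δx lam : ℝ) (ξ : ℝ → ℕ → ℝ) (l : ℕ) (s : ℕ → Bool) (j : ℕ) : ℝ :=
  if s j then (1/2 + lam/2 * ξ (rwPath xn Δx l s (j + 1)) (j + 1))
  else (1/2 - lam/2 * ξ (rwPath xn Δx l s (j + 1)) (j + 1))

noncomputable def pw (xn Δx lam : ℝ) (ξ : ℝ → ℕ → ℝ) (l k : ℕ) (s : ℕ → Bool) : ℝ :=
  ∏ j ∈ Finset.Ico k (l + 1), pfac xn Δx lam ξ l s j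

variable {xn Δx Δt lam : ℝ} {ξ : ℝ → ℕ → ℝ} {l : ℕ}

lemma rwPath_congr {s s' : ℕ → Bool} {k : ℕ} (h : ∀ i, k ≤ i → i ≤ l → s i = s' i) :
    rwPath xn Δx l s k = rwPath xn Δx l s' k := by
  unfold rwPath
  congr 2
  apply Finset.sum_congr rfl
  intro i hi
  simp only [Finset.mem_Ico] at hi
  rw [h i hi.1 (by omega)]

lemma rwEta_congr {s s' : ℕ → Bool} {k : ℕ} (h : ∀ i, k + 1 ≤ i → i ≤ l → s i = s' i) :
    rwEta xn Δx Δt ξ l s k = rwEta xn Δx Δt ξ l s' k := by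
  unfold rwEta
  congr 2
  apply Finset.sum_congr rfl
  intro i hi
  simp only [Finset.mem_Ico] at hi
  rw [rwPath_congr (k := i) (fun j hj hj' => h j (by omega) hj')]

lemma pfac_congr {s s' : ℕ → Bool} {j : ℕ} (h : ∀ i, j ≤ i → i ≤ l → s i = s' i) (hj : j ≤ l) :
    pfac xn Δx lam ξ l s j = pfac xn Δx lam ξ l s' j := by
  unfold pfac
  rw [h j le_rfl hj, rwPath_congr (k := j + 1) (fun i hi hi' => h i (by omega) hi')]

lemma pw_congr {s s' : ℕ → Bool} {k : ℕ} (h : ∀ i, k ≤ i → i ≤ l → s i = s' i) :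
    pw xn Δx lam ξ l k s = pw xn Δx lam ξ l k s' := by
  unfold pw
  apply Finset.prod_congr rfl
  intro j hj
  simp only [Finset.mem_Ico] at hj
  exact pfac_congr (fun i hi hi' => h i (by omega) hi') (by omega)

lemma rwPath_top (s : ℕ → Bool) : rwPath xn Δx l s (l + 1) = xn := by
  simp [rwPath]

lemma rwEta_top (s : ℕ → Bool) : rwEta xn Δx Δt ξ l s (l + 1) = xn := by
  simp [rwEta]

lemma rwPath_succ {k : ℕ} (hk : k ≤ l) (s : ℕ → Bool) :
    rwPath xn Δx l s k = rwPath xn Δx l s (k + 1) - Δx * (if s k then 1 else -1) := by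
  unfold rwPath
  rw [Finset.sum_eq_sum_Ico_succ_bot (by omega)]
  ring

lemma rwEta_succ {k : ℕ} (hk : k ≤ l) (s : ℕ → Bool) :
    rwEta xn Δx Δt ξ l s k
      = rwEta xn Δx Δt ξ l s (k + 1) - Δt * ξ (rwPath xn Δx l s (k + 1)) (k + 1) := by
  unfold rwEta
  rw [Finset.sum_eq_sum_Ico_succ_bot (by omega)]
  ring

lemma extBool_update_ne {k : ℕ} (hk : k < l + 1) (s : Fin (l + 1) → Bool) (b : Bool)
    {j : ℕ} (hj : j ≠ k) :
    extBool l (Function.update s ⟨k, hk⟩ b) j = extBool l s j := by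
  unfold extBool
  split
  · rw [Function.update_of_ne (by simp [Fin.ext_iff, hj])]
  · rfl

lemma extBool_update_self {k : ℕ} (hk : k < l + 1) (s : Fin (l + 1) → Bool) (b : Bool) :
    extBool l (Function.update s ⟨k, hk⟩ b) k = b := by
  unfold extBool
  rw [dif_pos hk, Function.update_self]




lemma sum_update {k : ℕ} (hk : k < l + 1) (F : (Fin (l + 1) → Bool) → ℝ) :
    ∑ s : Fin (l + 1) → Bool, F s
      = (1/2) * ∑ s : Fin (l + 1) → Bool,
          (F (Function.update s ⟨k, hk⟩ true) + F (Function.update s ⟨k, hk⟩ false)) := by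
  set kf : Fin (l + 1) := ⟨k, hk⟩
  have hinv : Function.Involutive (fun s : Fin (l + 1) → Bool => Function.update s kf (!(s kf))) := by
    intro s
    simp only [Function.update_self]
    rw [Bool.not_not, Function.update_idem]
    exact Function.update_eq_self kf s
  have hflip : ∑ s : Fin (l + 1) → Bool, F s
      = ∑ s : Fin (l + 1) → Bool, F (Function.update s kf (!(s kf))) :=
    (Fintype.sum_bijective _ hinv.bijective
      (fun s => F (Function.update s kf (!(s kf)))) F (fun s => rfl)).symm
  have key : ∀ s : Fin (l + 1) → Bool,
      F s + F (Function.update s kf (!(s kf)))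
        = F (Function.update s kf true) + F (Function.update s kf false) := by
    intro s
    have hself := Function.update_eq_self kf s
    cases hb : s kf
    · rw [hb] at hself
      simp only [hb, Bool.not_false]
      rw [hself, add_comm]
    · rw [hb] at hself
      simp only [hb, Bool.not_true]
      rw [hself]
  have : (2:ℝ) * ∑ s : Fin (l + 1) → Bool, F s
      = ∑ s : Fin (l + 1) → Bool,
          (F (Function.update s ⟨k, hk⟩ true) + F (Function.update s ⟨k, hk⟩ false)) := by
    rw [two_mul]
    nth_rewrite 2 [hflip]
    rw [← Finset.sum_add_distrib]
    exact Finset.sum_congr rfl (fun s _ => key s)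
  linarith

lemma step {k : ℕ} (hk : k ≤ l) (h : (ℕ → Bool) → ℝ) :
    ∑ s : Fin (l + 1) → Bool, pw xn Δx lam ξ l k (extBool l s) * h (extBool l s)
      = (1/2) * ∑ s : Fin (l + 1) → Bool,
          pw xn Δx lam ξ l (k + 1) (extBool l s) *
          ((1/2 + lam/2 * ξ (rwPath xn Δx l (extBool l s) (k + 1)) (k + 1)) *
              h (extBool l (Function.update s ⟨k, by omega⟩ true))
            + (1/2 - lam/2 * ξ (rwPath xn Δx l (extBool l s) (k + 1)) (k + 1)) *
              h (extBool l (Function.update s ⟨k, by omega⟩ false))) := by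
  have hk' : k < l + 1 := by omega
  rw [sum_update hk' (fun s => pw xn Δx lam ξ l k (extBool l s) * h (extBool l s))]
  congr 1
  apply Finset.sum_congr rfl
  intro s _
  have agree : ∀ (b : Bool) (i : ℕ), k + 1 ≤ i → i ≤ l →
      extBool l (Function.update s ⟨k, hk'⟩ b) i = extBool l s i := by
    intro b i hi _
    exact extBool_update_ne hk' s b (by omega)
  -- pw k = pfac k * pw (k+1)
  have hpw : ∀ σ : ℕ → Bool, pw xn Δx lam ξ l k σ = pfac xn Δx lam ξ l σ k * pw xn Δx lam ξ l (k+1) σ := by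
    intro σ
    unfold pw
    exact Finset.prod_eq_prod_Ico_succ_bot hk' _
  rw [hpw, hpw]
  have hpw1 : ∀ b, pw xn Δx lam ξ l (k+1) (extBool l (Function.update s ⟨k, hk'⟩ b))
      = pw xn Δx lam ξ l (k+1) (extBool l s) := fun b => pw_congr (agree b)
  have hpath : ∀ b, rwPath xn Δx l (extBool l (Function.update s ⟨k, hk'⟩ b)) (k+1)
      = rwPath xn Δx l (extBool l s) (k+1) := fun b => rwPath_congr (fun i hi hi' => agree b i hi hi')
  have hfA : pfac xn Δx lam ξ l (extBool l (Function.update s ⟨k, hk'⟩ true)) k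
      = 1/2 + lam/2 * ξ (rwPath xn Δx l (extBool l s) (k + 1)) (k + 1) := by
    unfold pfac
    rw [extBool_update_self hk', hpath true]
    simp
  have hfB : pfac xn Δx lam ξ l (extBool l (Function.update s ⟨k, hk'⟩ false)) k
      = 1/2 - lam/2 * ξ (rwPath xn Δx l (extBool l s) (k + 1)) (k + 1) := by
    unfold pfac
    rw [extBool_update_self hk', hpath false]
    simp
  rw [hpw1 true, hpw1 false, hfA, hfB]
  ring



lemma pfac_nonneg (hlam0 : 0 < lam) (hξ : ∀ x k, |ξ x k| ≤ 1 / lam) (s : ℕ → Bool) (j : ℕ) :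
    0 ≤ pfac xn Δx lam ξ l s j := by
  have key : |lam/2 * ξ (rwPath xn Δx l s (j + 1)) (j + 1)| ≤ 1/2 := by
    rw [abs_mul, abs_of_pos (by linarith : (0:ℝ) < lam/2)]
    calc lam/2 * |ξ (rwPath xn Δx l s (j + 1)) (j + 1)|
        ≤ lam/2 * (1/lam) := by
          exact mul_le_mul_of_nonneg_left (hξ _ _) (by linarith)
      _ = 1/2 := by field_simp
  have h2 := abs_le.mp key
  unfold pfac
  split <;> linarith [h2.1, h2.2]

lemma pw_nonneg (hlam0 : 0 < lam) (hξ : ∀ x k, |ξ x k| ≤ 1 / lam) (k : ℕ) (s : ℕ → Bool) :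
    0 ≤ pw xn Δx lam ξ l k s :=
  Finset.prod_nonneg (fun j _ => pfac_nonneg hlam0 hξ s j)

noncomputable def Ssum (xn Δx lam : ℝ) (ξ : ℝ → ℕ → ℝ) (l k : ℕ) : ℝ :=
  ∑ s : Fin (l + 1) → Bool, pw xn Δx lam ξ l k (extBool l s)

lemma Ssum_eq : ∀ m k, k + m = l + 1 → Ssum xn Δx lam ξ l k = 2 ^ k := by
  intro m
  induction m with
  | zero =>
    intro k hk
    have hkeq : k = l + 1 := by omega
    subst hkeq
    unfold Ssum pw
    rw [Finset.Ico_self]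
    simp only [Finset.prod_empty]
    rw [Finset.sum_const, Finset.card_univ]
    simp [Fintype.card_fun]
  | succ m ih =>
    intro k hk
    have hkl : k ≤ l := by omega
    have h := step (xn := xn) (Δx := Δx) (lam := lam) (ξ := ξ) hkl (fun _ => (1:ℝ))
    simp only [mul_one] at h
    unfold Ssum
    rw [h]
    have : ∀ s : Fin (l + 1) → Bool,
        pw xn Δx lam ξ l (k+1) (extBool l s) *
          ((1/2 + lam/2 * ξ (rwPath xn Δx l (extBool l s) (k + 1)) (k + 1))
            + (1/2 - lam/2 * ξ (rwPath xn Δx l (extBool l s) (k + 1)) (k + 1)))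
          = pw xn Δx lam ξ l (k+1) (extBool l s) := fun s => by ring
    rw [Finset.sum_congr rfl (fun s _ => this s)]
    have := ih (k+1) (by omega)
    unfold Ssum at this
    rw [this]
    ring

noncomputable def Vsum (xn Δx Δt lam : ℝ) (ξ : ℝ → ℕ → ℝ) (l k : ℕ) : ℝ :=
  ∑ s : Fin (l + 1) → Bool, pw xn Δx lam ξ l k (extBool l s) *
    (rwPath xn Δx l (extBool l s) k - rwEta xn Δx Δt ξ l (extBool l s) k)^2

lemma Vsum_bound (hlam0 : 0 < lam) (hld : lam * Δx = Δt)
    (hξ : ∀ x k, |ξ x k| ≤ 1 / lam) :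
    ∀ m k, k + m = l + 1 → Vsum xn Δx Δt lam ξ l k ≤ (m : ℝ) * Δx^2 * 2 ^ k := by
  intro m
  induction m with
  | zero =>
    intro k hk
    have hkeq : k = l + 1 := by omega
    subst hkeq
    unfold Vsum
    have : ∀ s : Fin (l + 1) → Bool,
        pw xn Δx lam ξ l (l+1) (extBool l s) *
          (rwPath xn Δx l (extBool l s) (l+1) - rwEta xn Δx Δt ξ l (extBool l s) (l+1))^2 = 0 := by
      intro s
      rw [rwPath_top, rwEta_top]
      ring
    rw [Finset.sum_congr rfl (fun s _ => this s)]
    simp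
  | succ m ih =>
    intro k hk
    have hkl : k ≤ l := by omega
    have hk' : k < l + 1 := by omega
    unfold Vsum
    rw [step hkl
      (fun σ => (rwPath xn Δx l σ k - rwEta xn Δx Δt ξ l σ k)^2)]
    have key : ∀ s : Fin (l + 1) → Bool,
        pw xn Δx lam ξ l (k+1) (extBool l s) *
          ((1/2 + lam/2 * ξ (rwPath xn Δx l (extBool l s) (k + 1)) (k + 1)) *
              (rwPath xn Δx l (extBool l (Function.update s ⟨k, hk'⟩ true)) k
                - rwEta xn Δx Δt ξ l (extBool l (Function.update s ⟨k, hk'⟩ true)) k)^2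
            + (1/2 - lam/2 * ξ (rwPath xn Δx l (extBool l s) (k + 1)) (k + 1)) *
              (rwPath xn Δx l (extBool l (Function.update s ⟨k, hk'⟩ false)) k
                - rwEta xn Δx Δt ξ l (extBool l (Function.update s ⟨k, hk'⟩ false)) k)^2)
        ≤ pw xn Δx lam ξ l (k+1) (extBool l s) *
            ((rwPath xn Δx l (extBool l s) (k+1) - rwEta xn Δx Δt ξ l (extBool l s) (k+1))^2 + Δx^2) := by
      intro s
      set σ := extBool l s with hσ
      set c := ξ (rwPath xn Δx l σ (k + 1)) (k + 1) with hc
      have agree : ∀ (b : Bool) (i : ℕ), k + 1 ≤ i → i ≤ l →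
          extBool l (Function.update s ⟨k, hk'⟩ b) i = σ i := by
        intro b i hi _
        exact extBool_update_ne hk' s b (by omega)
      have hD : ∀ b : Bool,
          rwPath xn Δx l (extBool l (Function.update s ⟨k, hk'⟩ b)) k
            - rwEta xn Δx Δt ξ l (extBool l (Function.update s ⟨k, hk'⟩ b)) k
          = (rwPath xn Δx l σ (k+1) - rwEta xn Δx Δt ξ l σ (k+1)) + Δt * c
              - Δx * (if b then 1 else -1) := by
        intro b
        rw [rwPath_succ hkl, rwEta_succ hkl]
        rw [rwPath_congr (k := k + 1) (agree b),
          rwEta_congr (k := k + 1) (fun i hi hi' => agree b i (by omega) hi'),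
          extBool_update_self hk']
        rw [← hc]
        ring
      rw [hD true, hD false]
      have hpwpos := pw_nonneg (xn := xn) (Δx := Δx) (l := l) hlam0 hξ (k+1) σ
      set a := rwPath xn Δx l σ (k+1) - rwEta xn Δx Δt ξ l σ (k+1) with ha
      have inner : (1/2 + lam/2 * c) * (a + Δt * c - Δx * 1)^2
          + (1/2 - lam/2 * c) * (a + Δt * c - Δx * (-1))^2 ≤ a^2 + Δx^2 := by
        have heq : (1/2 + lam/2 * c) * (a + Δt * c - Δx * 1)^2
            + (1/2 - lam/2 * c) * (a + Δt * c - Δx * (-1))^2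
            = a^2 + Δx^2 - (Δt * c)^2 := by
          linear_combination (-2 * (a + Δt * c) * c) * hld
        rw [heq]
        nlinarith [sq_nonneg (Δt * c)]
      simp only [if_true, if_false]
      exact mul_le_mul_of_nonneg_left inner hpwpos
    calc (1/2) * ∑ s : Fin (l + 1) → Bool, _
        ≤ (1/2) * ∑ s : Fin (l + 1) → Bool,
            pw xn Δx lam ξ l (k+1) (extBool l s) *
              ((rwPath xn Δx l (extBool l s) (k+1) - rwEta xn Δx Δt ξ l (extBool l s) (k+1))^2
                + Δx^2) := by
          apply mul_le_mul_of_nonneg_left (Finset.sum_le_sum (fun s _ => key s)) (by norm_num)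
      _ = (1/2) * (Vsum xn Δx Δt lam ξ l (k+1) + Δx^2 * Ssum xn Δx lam ξ l (k+1)) := by
          unfold Vsum Ssum
          simp only [mul_add, Finset.mul_sum]
          rw [← Finset.sum_add_distrib]
          apply Finset.sum_congr rfl
          intro s _
          ring
      _ ≤ (1/2) * ((m : ℝ) * Δx^2 * 2^(k+1) + Δx^2 * 2^(k+1)) := by
          have h1 := ih (k+1) (by omega)
          have h2 := Ssum_eq (xn := xn) (Δx := Δx) (lam := lam) (ξ := ξ) (l := l) m (k+1) (by omega)
          rw [h2]
          nlinarith
      _ = ((m + 1 : ℕ) : ℝ) * Δx^2 * 2^k := by push_cast; ring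

lemma marg {K : ℕ} (hK : K ≤ l + 1) (h : (ℕ → Bool) → ℝ)
    (hinv : ∀ (s : Fin (l+1) → Bool) (j : ℕ) (hj : j < l + 1), j < K → ∀ b,
      h (extBool l (Function.update s ⟨j, hj⟩ b)) = h (extBool l s)) :
    ∀ k, k ≤ K →
      ∑ s : Fin (l+1) → Bool, pw xn Δx lam ξ l 0 (extBool l s) * h (extBool l s)
        = (1/2)^k * ∑ s : Fin (l+1) → Bool, pw xn Δx lam ξ l k (extBool l s) * h (extBool l s) := by
  intro k
  induction k with
  | zero => intro _; simp
  | succ k ih =>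
    intro hk1
    rw [ih (by omega)]
    have hkl : k ≤ l := by omega
    rw [step hkl h]
    have heach : ∀ s : Fin (l+1) → Bool,
        pw xn Δx lam ξ l (k+1) (extBool l s) *
          ((1/2 + lam/2 * ξ (rwPath xn Δx l (extBool l s) (k + 1)) (k + 1)) *
              h (extBool l (Function.update s ⟨k, by omega⟩ true))
            + (1/2 - lam/2 * ξ (rwPath xn Δx l (extBool l s) (k + 1)) (k + 1)) *
              h (extBool l (Function.update s ⟨k, by omega⟩ false)))
        = pw xn Δx lam ξ l (k+1) (extBool l s) * h (extBool l s) := by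
      intro s
      rw [hinv s k (by omega) (by omega) true, hinv s k (by omega) (by omega) false]
      ring
    rw [Finset.sum_congr rfl (fun s _ => heach s)]
    ring


end RW6

theorem stmt_6 (xn Δx Δt lam : ℝ) (l : ℕ) (ξ : ℝ → ℕ → ℝ)
    (hΔx : 0 < Δx) (hΔt : 0 < Δt) (hlam : lam = Δt / Δx)
    (hξ : ∀ x k, |ξ x k| ≤ 1 / lam) :
    ∀ k ≤ l + 1,
      (rwExp xn Δx Δt lam ξ l
          (fun s => |rwPath xn Δx l s k - rwEta xn Δx Δt ξ l s k|))^2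
        ≤ rwExp xn Δx Δt lam ξ l
            (fun s => |rwPath xn Δx l s k - rwEta xn Δx Δt ξ l s k|^2)
      ∧ rwExp xn Δx Δt lam ξ l
            (fun s => |rwPath xn Δx l s k - rwEta xn Δx Δt ξ l s k|^2)
          ≤ (((l + 1 - k : ℕ) : ℝ) * Δt) / lam * Δx := by
  intro k hk
  have hΔx' : Δx ≠ 0 := ne_of_gt hΔx
  have hΔt' : Δt ≠ 0 := ne_of_gt hΔt
  have hlam0 : 0 < lam := by rw [hlam]; positivity
  have hld : lam * Δx = Δt := by rw [hlam]; field_simp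
  have hw : ∀ s : ℕ → Bool, rwWeight xn Δx lam ξ l s = RW6.pw xn Δx lam ξ l 0 s := by
    intro s
    unfold rwWeight RW6.pw RW6.pfac
    rw [Finset.range_eq_Ico]
  have hw0 : ∀ s : Fin (l+1) → Bool, 0 ≤ RW6.pw xn Δx lam ξ l 0 (extBool l s) :=
    fun s => RW6.pw_nonneg hlam0 hξ 0 _
  have hsum0 : ∑ s : Fin (l+1) → Bool, RW6.pw xn Δx lam ξ l 0 (extBool l s) = 1 := by
    have := RW6.Ssum_eq (xn := xn) (Δx := Δx) (lam := lam) (ξ := ξ) (l := l) (l+1) 0 (by omega)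
    unfold RW6.Ssum at this
    simpa using this
  have hinv2 : ∀ (s : Fin (l+1) → Bool) (j : ℕ) (hj : j < l + 1), j < k → ∀ b,
      rwPath xn Δx l (extBool l (Function.update s ⟨j, hj⟩ b)) k
        - rwEta xn Δx Δt ξ l (extBool l (Function.update s ⟨j, hj⟩ b)) k
      = rwPath xn Δx l (extBool l s) k - rwEta xn Δx Δt ξ l (extBool l s) k := by
    intro s j hj hjk b
    have agree : ∀ i, k ≤ i → i ≤ l →
        extBool l (Function.update s ⟨j, hj⟩ b) i = extBool l s i :=
      fun i hi _ => RW6.extBool_update_ne hj s b (by omega)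
    rw [RW6.rwPath_congr agree,
      RW6.rwEta_congr (fun i hi hi' => agree i (by omega) hi')]
  have hE2 : rwExp xn Δx Δt lam ξ l
      (fun s => |rwPath xn Δx l s k - rwEta xn Δx Δt ξ l s k|^2)
      = (1/2)^k * RW6.Vsum xn Δx Δt lam ξ l k := by
    unfold rwExp
    simp only [hw, sq_abs]
    rw [RW6.marg hk
      (fun σ => (rwPath xn Δx l σ k - rwEta xn Δx Δt ξ l σ k)^2)
      (fun s j hj hjk b => by rw [hinv2 s j hj hjk b]) k le_rfl]
    rfl
  have hpow : (1/2:ℝ)^k * 2^k = 1 := by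
    rw [← mul_pow]; norm_num
  have hE2le : rwExp xn Δx Δt lam ξ l
      (fun s => |rwPath xn Δx l s k - rwEta xn Δx Δt ξ l s k|^2)
      ≤ ((l + 1 - k : ℕ) : ℝ) * Δx^2 := by
    rw [hE2]
    have hV := RW6.Vsum_bound (xn := xn) (l := l) hlam0 hld hξ (l+1-k) k (by omega)
    calc (1/2:ℝ)^k * RW6.Vsum xn Δx Δt lam ξ l k
        ≤ (1/2:ℝ)^k * (((l + 1 - k : ℕ) : ℝ) * Δx^2 * 2^k) :=
          mul_le_mul_of_nonneg_left hV (by positivity)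
      _ = ((l + 1 - k : ℕ) : ℝ) * Δx^2 * ((1/2:ℝ)^k * 2^k) := by ring
      _ = ((l + 1 - k : ℕ) : ℝ) * Δx^2 := by rw [hpow, mul_one]
  constructor
  · -- Cauchy–Schwarz
    unfold rwExp
    simp only [hw]
    have cs := Finset.sum_mul_sq_le_sq_mul_sq Finset.univ
      (fun s : Fin (l+1) → Bool => Real.sqrt (RW6.pw xn Δx lam ξ l 0 (extBool l s)))
      (fun s : Fin (l+1) → Bool => Real.sqrt (RW6.pw xn Δx lam ξ l 0 (extBool l s)) *
        |rwPath xn Δx l (extBool l s) k - rwEta xn Δx Δt ξ l (extBool l s) k|)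
    have e1 : ∀ s : Fin (l+1) → Bool,
        Real.sqrt (RW6.pw xn Δx lam ξ l 0 (extBool l s)) *
          (Real.sqrt (RW6.pw xn Δx lam ξ l 0 (extBool l s)) *
            |rwPath xn Δx l (extBool l s) k - rwEta xn Δx Δt ξ l (extBool l s) k|)
        = RW6.pw xn Δx lam ξ l 0 (extBool l s) *
            |rwPath xn Δx l (extBool l s) k - rwEta xn Δx Δt ξ l (extBool l s) k| := by
      intro s
      rw [← mul_assoc, Real.mul_self_sqrt (hw0 s)]
    have e2 : ∀ s : Fin (l+1) → Bool,
        (Real.sqrt (RW6.pw xn Δx lam ξ l 0 (extBool l s)))^2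
          = RW6.pw xn Δx lam ξ l 0 (extBool l s) := fun s => Real.sq_sqrt (hw0 s)
    have e3 : ∀ s : Fin (l+1) → Bool,
        (Real.sqrt (RW6.pw xn Δx lam ξ l 0 (extBool l s)) *
          |rwPath xn Δx l (extBool l s) k - rwEta xn Δx Δt ξ l (extBool l s) k|)^2
        = RW6.pw xn Δx lam ξ l 0 (extBool l s) *
            |rwPath xn Δx l (extBool l s) k - rwEta xn Δx Δt ξ l (extBool l s) k|^2 := by
      intro s
      rw [mul_pow, e2]
    rw [Finset.sum_congr rfl (fun s _ => e1 s), Finset.sum_congr rfl (fun s _ => e2 s),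
      Finset.sum_congr rfl (fun s _ => e3 s), hsum0, one_mul] at cs
    exact cs
  · have htarget : (((l + 1 - k : ℕ) : ℝ) * Δt) / lam * Δx
        = ((l + 1 - k : ℕ) : ℝ) * Δx^2 := by
      rw [← hld]
      field_simp
    rw [htarget]
    exact hE2le
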